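/- (Bound of the radial subgradient on bounded sets well-inside the domain.) Assume Λ is radially convex in the control variable and bounded on the bounded sets that are well-inside Dom(Λ), and let Q be a selection of ∂_r Λ(s,y,ru)_{r=1}. Then Q is bounded on the bounded sets that are well-inside Dom(Λ): for every C > 0 and ρ > 0 there is M ≥ 0 such that |Q(s,y,u)| ≤ M whenever (s,y,u) ∈ Dom(Λ), u ∈ 𝒰, |y| + |u| ≤ C and dist((s,y,u), ∂Dom(Λ)) ≥ ρ. -/

import Mathlib

open MeasureTheory Set Filter
open scoped ENNReal NNReal

noncomputable section

/-- Euclidean space `ℝ^k`. -/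
abbrev Vec (k : ℕ) : Type := EuclideanSpace ℝ (Fin k)

/-- The control set is a nonempty cone. -/
def IsCone {k : ℕ} (U : Set (Vec k)) : Prop :=
  U.Nonempty ∧ ∀ u ∈ U, ∀ c : ℝ, 0 < c → c • u ∈ U

variable {n m : ℕ}

/-- The effective domain of the Lagrangian, inside `[0,T] × ℝⁿ × ℝᵐ`. -/
def domSet (T : ℝ) (L : ℝ → Vec n → Vec m → ℝ≥0∞) : Set (ℝ × Vec n × Vec m) :=
  {p | p.1 ∈ Icc 0 T ∧ L p.1 p.2.1 p.2.2 ≠ ⊤}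

/-- Boundary of the effective domain relative to `[0,T] × ℝⁿ × ℝᵐ`. -/
def bdryDom (T : ℝ) (L : ℝ → Vec n → Vec m → ℝ≥0∞) : Set (ℝ × Vec n × Vec m) :=
  closure (domSet T L) ∩
    closure ((Icc (0:ℝ) T ×ˢ (univ : Set (Vec n × Vec m))) \ domSet T L)

/-- Distance to the boundary of the effective domain. -/
def distBdry (T : ℝ) (L : ℝ → Vec n → Vec m → ℝ≥0∞) (p : ℝ × Vec n × Vec m) : ℝ :=
  Metric.infDist p (bdryDom T L)

/-- The effective domain is strictly star-shaped in the control variable. -/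
def StarShapedDom (T : ℝ) (L : ℝ → Vec n → Vec m → ℝ≥0∞) : Prop :=
  ∀ᵐ s ∂(volume : Measure ℝ), s ∈ Icc (0:ℝ) T → ∀ (y : Vec n) (u : Vec m),
    L s y u ≠ ⊤ → ∀ r : ℝ, 0 < r → r ≤ 1 → L s y (r • u) ≠ ⊤

/-- Linear growth from below: `L(s,y,u) ≥ α‖u‖ − d` for `u ∈ U`. -/
def LinearGrowth (T : ℝ) (L : ℝ → Vec n → Vec m → ℝ≥0∞) (U : Set (Vec m))
    (α d : ℝ) : Prop :=
  ∀ᵐ s ∂(volume : Measure ℝ), s ∈ Icc (0:ℝ) T → ∀ y : Vec n, ∀ u ∈ U,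
    ENNReal.ofReal (α * ‖u‖ - d) ≤ L s y u

/-- Condition (S), with explicit constants `κ, A, γ, ε`. -/
def ConditionSWith (T : ℝ) (L : ℝ → Vec n → Vec m → ℝ≥0∞) (U : Set (Vec m))
    (κ A : ℝ) (γ : ℝ → ℝ) (ε : ℝ) : Prop :=
  0 ≤ κ ∧ 0 ≤ A ∧ (∀ s, 0 ≤ γ s) ∧ IntegrableOn γ (Icc 0 T) ∧ 0 < ε ∧
  ∀ᵐ s ∂(volume : Measure ℝ), s ∈ Icc (0:ℝ) T →
    ∀ s₁ ∈ Icc (s - ε) (s + ε) ∩ Icc (0:ℝ) T, ∀ s₂ ∈ Icc (s - ε) (s + ε) ∩ Icc (0:ℝ) T,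
    ∀ y : Vec n, ∀ u ∈ U, L s₁ y u ≠ ⊤ → L s₂ y u ≠ ⊤ →
      ENNReal.ofReal |(L s₂ y u).toReal - (L s₁ y u).toReal| ≤
        (ENNReal.ofReal κ * L s y u + ENNReal.ofReal (A * ‖u‖ + γ s)) *
          ENNReal.ofReal |s₂ - s₁|

/-- The constant `c_t(B) = (B + d(T−t))/(α(T−t))`. -/
def cLow (T α d B t : ℝ) : ℝ := (B + d * (T - t)) / (α * (T - t))

/-- The constant `Φ(B) = κB + (A/α)(B + dT) + ‖γ‖₁`. -/
def PhiB (T κ A : ℝ) (γ : ℝ → ℝ) (α d B : ℝ) : ℝ :=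
  κ * B + A / α * (B + d * T) + ∫ s in Icc (0:ℝ) T, γ s

/-- Radial convexity in the control variable. -/
def RadiallyConvex (T : ℝ) (L : ℝ → Vec n → Vec m → ℝ≥0∞) (U : Set (Vec m)) : Prop :=
  ∀ᵐ s ∂(volume : Measure ℝ), s ∈ Icc (0:ℝ) T → ∀ y : Vec n, ∀ u ∈ U,
    ∀ r₁ r₂ : ℝ, 0 < r₁ → 0 < r₂ → ∀ a c : ℝ, 0 ≤ a → 0 ≤ c → a + c = 1 →
      L s y ((a * r₁ + c * r₂) • u) ≤
        ENNReal.ofReal a * L s y (r₁ • u) + ENNReal.ofReal c * L s y (r₂ • u)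

/-- A selection of the radial convex subdifferential `∂_r L(s,y,ru)` at `r = 1`. -/
def IsRadialSelection (T : ℝ) (L : ℝ → Vec n → Vec m → ℝ≥0∞) (U : Set (Vec m))
    (Q : ℝ → Vec n → Vec m → ℝ) : Prop :=
  ∀ s ∈ Icc (0:ℝ) T, ∀ y : Vec n, ∀ u ∈ U, L s y u ≠ ⊤ → ∀ r : ℝ, 0 < r →
    ENNReal.ofReal ((L s y u).toReal + Q s y u * (r - 1)) ≤ L s y (r • u)

/-- `L` is bounded on the bounded sets that are well-inside its domain. -/
def BddWellInside (T : ℝ) (L : ℝ → Vec n → Vec m → ℝ≥0∞) : Prop :=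
  ∀ C > (0:ℝ), ∀ ρ > (0:ℝ), ∃ M : ℝ,
    ∀ s ∈ Icc (0:ℝ) T, ∀ (y : Vec n) (u : Vec m), L s y u ≠ ⊤ →
      ‖y‖ + ‖u‖ ≤ C → ρ ≤ distBdry T L (s, y, u) → L s y u ≤ ENNReal.ofReal M

/-- Condition (H_B^δ), radial convex form. -/
def ConditionH (T : ℝ) (L : ℝ → Vec n → Vec m → ℝ≥0∞) (U : Set (Vec m))
    (α d κ A : ℝ) (γ : ℝ → ℝ) (δ B : ℝ) : Prop :=
  ∀ K ≥ (0:ℝ), ∃ ν > (0:ℝ), ∃ c > cLow T α d B δ, ∃ Q : ℝ → Vec n → Vec m → ℝ,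
    IsRadialSelection T L U Q ∧
    ∀ ρ > (0:ℝ), ∃ Sup Inf : ℝ,
      (∀ s ∈ Icc (0:ℝ) T, ∀ y : Vec n, ‖y‖ ≤ K → ∀ u ∈ U, ν ≤ ‖u‖ → L s y u ≠ ⊤ →
        (L s y u).toReal - Q s y u ≤ Sup) ∧
      (∀ s ∈ Icc (0:ℝ) T, ∀ y : Vec n, ‖y‖ ≤ K → ∀ u ∈ U, ‖u‖ < c → L s y u ≠ ⊤ →
        ρ ≤ distBdry T L (s, y, u) → Inf ≤ (L s y u).toReal - Q s y u) ∧
      Sup + 2 * PhiB T κ A γ α d B < Inf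

/-- Condition (M_B^δ), radial convex form. -/
def ConditionM (T : ℝ) (L : ℝ → Vec n → Vec m → ℝ≥0∞) (U : Set (Vec m))
    (α d : ℝ) (δ B : ℝ) : Prop :=
  ∀ K ≥ (0:ℝ), ∃ ν > (0:ℝ), ∃ c > cLow T α d B δ, ∃ Q : ℝ → Vec n → Vec m → ℝ,
    IsRadialSelection T L U Q ∧
    ∀ ρ > (0:ℝ),
      (∃ Inf : ℝ, ∀ s ∈ Icc (0:ℝ) T, ∀ y : Vec n, ‖y‖ ≤ K → ∀ u ∈ U, ‖u‖ < c →
        L s y u ≠ ⊤ → ρ ≤ distBdry T L (s, y, u) → Inf ≤ (L s y u).toReal - Q s y u) ∧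
      (∃ Sup : ℝ, ∀ s ∈ Icc (0:ℝ) T, ∀ y : Vec n, ‖y‖ ≤ K → ∀ u ∈ U, ν ≤ ‖u‖ →
        L s y u ≠ ⊤ → (L s y u).toReal - Q s y u ≤ Sup)

/-- Hypothesis (h₁): the effective domain is a product `[0,T] × D`. -/
def Hyp1 (T : ℝ) (L : ℝ → Vec n → Vec m → ℝ≥0∞) : Prop :=
  ∃ D : Set (Vec n × Vec m), domSet T L = Icc (0:ℝ) T ×ˢ D

/-- Hypothesis (h₂): `L` tends uniformly to `+∞` at the boundary of its domain. -/
def Hyp2 (T : ℝ) (L : ℝ → Vec n → Vec m → ℝ≥0∞) (U : Set (Vec m)) : Prop :=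
  ∀ M : ℝ, ∃ ρ > (0:ℝ), ∀ s ∈ Icc (0:ℝ) T, ∀ y : Vec n, ∀ u ∈ U, L s y u ≠ ⊤ →
    distBdry T L (s, y, u) < ρ → ENNReal.ofReal M ≤ L s y u

/-- The Bolza functional `J_t(y,u)`. -/
def Jfun (T : ℝ) (L : ℝ → Vec n → Vec m → ℝ≥0∞) (g : Vec n → ℝ≥0∞)
    (t : ℝ) (y : ℝ → Vec n) (u : ℝ → Vec m) : ℝ≥0∞ :=
  (∫⁻ s in Icc t T, L s (y s) (u s)) + g (y T)

/-- An admissible pair for problem (P_{t,x}). -/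
def Admissible (T : ℝ) (L : ℝ → Vec n → Vec m → ℝ≥0∞) (U : Set (Vec m))
    (b : Vec n → Vec m →L[ℝ] Vec n) (g : Vec n → ℝ≥0∞) (S : Set (Vec n))
    (t : ℝ) (x : Vec n) (y : ℝ → Vec n) (u : ℝ → Vec m) : Prop :=
  Measurable u ∧ (∀ᵐ s ∂(volume : Measure ℝ), s ∈ Icc t T → u s ∈ U) ∧
  IntegrableOn (fun τ => b (y τ) (u τ)) (Icc t T) ∧
  (∀ s ∈ Icc t T, y s = x + ∫ τ in Icc t s, b (y τ) (u τ)) ∧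
  (∀ s ∈ Icc t T, y s ∈ S) ∧
  Jfun T L g t y u ≠ ⊤

/-- The value `inf (P_{t,x})`. -/
def infP (T : ℝ) (L : ℝ → Vec n → Vec m → ℝ≥0∞) (U : Set (Vec m))
    (b : Vec n → Vec m →L[ℝ] Vec n) (g : Vec n → ℝ≥0∞) (S : Set (Vec n))
    (t : ℝ) (x : Vec n) : ℝ≥0∞ :=
  sInf {v | ∃ y u, Admissible T L U b g S t x y u ∧ Jfun T L g t y u = v}

/-- A minimizing sequence for (P_{t,x}). -/
def MinimizingSeq (T : ℝ) (L : ℝ → Vec n → Vec m → ℝ≥0∞) (U : Set (Vec m))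
    (b : Vec n → Vec m →L[ℝ] Vec n) (g : Vec n → ℝ≥0∞) (S : Set (Vec n))
    (t : ℝ) (x : Vec n) (y : ℕ → ℝ → Vec n) (u : ℕ → ℝ → Vec m) : Prop :=
  (∀ j, Admissible T L U b g S t x (y j) (u j)) ∧
  Tendsto (fun j => Jfun T L g t (y j) (u j)) atTop (nhds (infP T L U b g S t x))

lemma frontier_aux {X : Type*} [TopologicalSpace X] {s t : Set X}
    (hs : IsPreconnected s) (h1 : (s ∩ t).Nonempty) (h2 : (s \ t).Nonempty) :
    (s ∩ frontier t).Nonempty := by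
  by_contra h
  rw [Set.not_nonempty_iff_eq_empty, ← Set.disjoint_iff_inter_eq_empty] at h
  have hsub : s ⊆ interior t ∪ interior tᶜ := by
    rw [← compl_frontier_eq_union_interior]
    exact h.subset_compl_right
  have hdisj : Disjoint (interior t) (interior tᶜ) :=
    disjoint_compl_right.mono interior_subset interior_subset
  rcases hs.subset_or_subset isOpen_interior isOpen_interior hdisj hsub with hc | hc
  · obtain ⟨x, hxs, hxt⟩ := h2
    exact hxt (interior_subset (hc hxs))
  · obtain ⟨x, hxs, hxt⟩ := h1
    exact (interior_subset (hc hxs)) hxt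

/-- bound of the radial subgradient on bounded sets well-inside the domain. -/
theorem stmt_7 (T : ℝ) (hT : 0 < T) (n m : ℕ)
    (L : ℝ → Vec n → Vec m → ℝ≥0∞)
    (hmeas : Measurable fun p : ℝ × Vec n × Vec m => L p.1 p.2.1 p.2.2)
    (U : Set (Vec m)) (hU : IsCone U)
    (hconv : RadiallyConvex T L U)
    (hbdd : BddWellInside T L)
    (Q : ℝ → Vec n → Vec m → ℝ) (hQ : IsRadialSelection T L U Q) :
    ∀ C > (0:ℝ), ∀ ρ > (0:ℝ), ∃ M : ℝ, 0 ≤ M ∧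
      ∀ s ∈ Icc (0:ℝ) T, ∀ (y : Vec n), ∀ u ∈ U, L s y u ≠ ⊤ →
        ‖y‖ + ‖u‖ ≤ C → ρ ≤ distBdry T L (s, y, u) → |Q s y u| ≤ M := by
  intro C hC ρ hρ
  set h : ℝ := min (ρ / (4 * C)) (1/2) with hh
  have hhpos : 0 < h := lt_min (div_pos hρ (by linarith)) (by norm_num)
  have hhle : h ≤ 1/2 := min_le_right _ _
  have hhC : h * C ≤ ρ / 4 := by
    have h1 : h ≤ ρ / (4 * C) := min_le_left _ _
    have : h * C ≤ (ρ / (4 * C)) * C := by nlinarith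
    calc h * C ≤ (ρ / (4 * C)) * C := this
      _ = ρ / 4 := by field_simp
  obtain ⟨M', hM'⟩ := hbdd (2*C) (by linarith) (ρ/2) (by linarith)
  set M'' : ℝ := max M' 0 with hM''
  refine ⟨M'' / h, div_nonneg (le_max_right _ _) hhpos.le, ?_⟩
  intro s hs y u hu hL hCb hd
  have hun : ‖u‖ ≤ C := by
    have := norm_nonneg y; linarith
  have key : ∀ r : ℝ, 0 < r → |r - 1| ≤ h → Q s y u * (r-1) ≤ M'' := by
    intro r hr hrh
    have hdu : dist u (r • u) ≤ ρ / 4 := by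
      rw [dist_eq_norm]
      have : u - r • u = (1 - r) • u := by
        rw [sub_smul, one_smul]
      rw [this, norm_smul, Real.norm_eq_abs]
      have habs : |1 - r| ≤ h := by rw [abs_sub_comm]; exact hrh
      have : |1 - r| * ‖u‖ ≤ h * C := by
        apply mul_le_mul habs hun (norm_nonneg u) hhpos.le
      linarith
    have hdpq : dist ((y, u) : Vec n × Vec m) (y, r • u) ≤ ρ / 4 := by
      rw [Prod.dist_eq]
      simp only [dist_self]
      exact max_le (by linarith) hdu
    have hmem : L s y (r • u) ≠ ⊤ := by
      by_contra hT'
      set D : Set (Vec n × Vec m) := {v | L s v.1 v.2 ≠ ⊤} with hD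
      have hmemD : ((y, u) : Vec n × Vec m) ∈ D := hL
      have hnotD : ((y, r • u) : Vec n × Vec m) ∉ D := fun hc => hc hT'
      have hseg := frontier_aux (t := D)
        (convex_segment ((y, u) : Vec n × Vec m) (y, r • u)).isPreconnected
        ⟨(y, u), left_mem_segment ℝ _ _, hmemD⟩
        ⟨(y, r • u), right_mem_segment ℝ _ _, hnotD⟩
      obtain ⟨w, hwseg, hwf⟩ := hseg
      rw [frontier_eq_closure_inter_closure] at hwf
      have hwb : ((s, w) : ℝ × Vec n × Vec m) ∈ bdryDom T L := by
        constructor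
        · refine map_mem_closure (f := fun v : Vec n × Vec m => ((s, v) : ℝ × Vec n × Vec m))
            (continuous_const.prodMk continuous_id) hwf.1 ?_
          intro v hv
          exact ⟨hs, hv⟩
        · refine map_mem_closure (f := fun v : Vec n × Vec m => ((s, v) : ℝ × Vec n × Vec m))
            (continuous_const.prodMk continuous_id) hwf.2 ?_
          intro v hv
          refine ⟨⟨hs, trivial⟩, ?_⟩
          intro hc
          exact hv hc.2
      have hinf : Metric.infDist ((s, y, u) : ℝ × Vec n × Vec m) (bdryDom T L) ≤
          dist ((s, y, u) : ℝ × Vec n × Vec m) (s, w) :=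
        Metric.infDist_le_dist_of_mem hwb
      have hdw : dist ((y, u) : Vec n × Vec m) w ≤ ρ / 4 := by
        have := dist_add_dist_of_mem_segment hwseg
        have hnn := dist_nonneg (x := w) (y := ((y, r • u) : Vec n × Vec m))
        linarith
      have hdsw : dist ((s, y, u) : ℝ × Vec n × Vec m) (s, w) ≤ ρ / 4 := by
        rw [Prod.dist_eq]
        simp only [dist_self]
        exact max_le (by linarith) hdw
      have : ρ ≤ ρ / 4 := le_trans (le_trans hd hinf) hdsw
      linarith
    have hd2 : ρ / 2 ≤ distBdry T L (s, y, r • u) := by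
      have hli := Metric.infDist_le_infDist_add_dist
        (x := ((s, y, u) : ℝ × Vec n × Vec m)) (y := ((s, y, r • u) : ℝ × Vec n × Vec m))
        (s := bdryDom T L)
      have hdpq' : dist ((s, y, u) : ℝ × Vec n × Vec m) (s, y, r • u) ≤ ρ / 4 := by
        rw [Prod.dist_eq]
        simp only [dist_self]
        exact max_le (by linarith) hdpq
      unfold distBdry at hd ⊢
      linarith
    have hnorm : ‖y‖ + ‖r • u‖ ≤ 2 * C := by
      rw [norm_smul, Real.norm_eq_abs]
      have hrle : |r| ≤ 3/2 := by
        rw [abs_le] at hrh ⊢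
        constructor <;> [linarith; linarith]
      have h3 : |r| * ‖u‖ ≤ (3/2) * ‖u‖ :=
        mul_le_mul_of_nonneg_right hrle (norm_nonneg u)
      have h4 := norm_nonneg y
      have h5 := norm_nonneg u
      linarith
    have hLe : L s y (r • u) ≤ ENNReal.ofReal M' := hM' s hs y (r • u) hmem hnorm hd2
    have hsel := hQ s hs y u hu hL r hr
    have hfin : ENNReal.ofReal ((L s y u).toReal + Q s y u * (r - 1)) ≤ ENNReal.ofReal M'' :=
      hsel.trans (hLe.trans (ENNReal.ofReal_le_ofReal (le_max_left _ _)))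
    have hre := (ENNReal.ofReal_le_ofReal_iff (le_max_right M' 0)).1 hfin
    have h0 : 0 ≤ (L s y u).toReal := ENNReal.toReal_nonneg
    linarith
  have h1 := key (1 + h) (by linarith) (by simp [abs_of_nonneg hhpos.le])
  have h2 := key (1 - h) (by linarith) (by rw [show (1 - h) - 1 = -h by ring, abs_neg, abs_of_nonneg hhpos.le])
  rw [abs_le]
  constructor
  · rw [neg_le, le_div_iff₀ hhpos]
    linarith
  · rw [le_div_iff₀ hhpos]
    linarith
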